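/- Let Q be an orthogonal projection of trace c/m in M_n(ℂ), where m ≥ 2 and m divides c and 2c ≤ n. Then there exist m+1 mutually commuting orthogonal projections P₀, P₁, …, P_m, each of trace c, such that m·Q = P₁ + ⋯ + P_m − (m−1)·P₀. -/

import Mathlib

open Matrix Finset

lemma filter_mod_card_aux (m r j : ℕ) (hm : 0 < m) (hj : j < m) :
    ((Finset.range (m * r)).filter (fun t => t % m = j)).card = r := by
  have himg : (Finset.range (m * r)).filter (fun t => t % m = j)
      = (Finset.range r).image (fun x => x * m + j) := by
    ext t
    simp only [Finset.mem_filter, Finset.mem_range, Finset.mem_image]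
    constructor
    · rintro ⟨ht, hmod⟩
      refine ⟨t / m, (Nat.div_lt_iff_lt_mul hm).2 (by rw [Nat.mul_comm]; exact ht), ?_⟩
      conv_rhs => rw [← Nat.div_add_mod t m]
      rw [hmod, Nat.mul_comm]
    · rintro ⟨x, hx, rfl⟩
      refine ⟨?_, ?_⟩
      · calc x * m + j < x * m + m := by omega
          _ = (x + 1) * m := by ring
          _ ≤ r * m := Nat.mul_le_mul_right m hx
          _ = m * r := Nat.mul_comm r m
      · rw [Nat.add_comm, Nat.add_mul_mod_self_right, Nat.mod_eq_of_lt hj]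
  rw [himg, Finset.card_image_of_injective _ (fun a b h => by
    have h2 : a * m = b * m := by omega
    exact Nat.eq_of_mul_eq_mul_right hm h2), Finset.card_range]

lemma filter_mod_card_fin (c m r j : ℕ) (hm : 0 < m) (hc : c = m * r) (hj : j < m) :
    ((Finset.univ : Finset (Fin c)).filter (fun t : Fin c => t.val % m = j)).card = r := by
  rw [← filter_mod_card_aux m r j hm hj]
  refine Finset.card_nbij (fun t : Fin c => (t : ℕ)) ?_ ?_ ?_
  · intro a ha
    simp only [Finset.mem_coe, Finset.mem_filter, Finset.mem_univ, true_and] at ha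
    simp only [Finset.mem_coe, Finset.mem_filter, Finset.mem_range]
    exact ⟨hc ▸ a.2, ha⟩
  · intro a _ b _ hab
    exact Fin.ext hab
  · intro b hb
    simp only [Finset.coe_filter, Finset.mem_range, Set.mem_setOf_eq] at hb
    exact ⟨⟨b, hc ▸ hb.1⟩, by simp [hb.2], rfl⟩

/-- Every projection of trace `c/m` is of the form
`(1/m)[P₁ + ⋯ + P_m − (m−1)P₀]` for mutually commuting projections `P_i` of trace `c`. -/
theorem stmt5 {n c m : ℕ} (hm : 2 ≤ m) (hdvd : m ∣ c) (h2c : 2 * c ≤ n) (hcm : 1 ≤ c / m)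
    (Q : Matrix (Fin n) (Fin n) ℂ)
    (hQ : Q.IsHermitian ∧ Q * Q = Q ∧ Q.trace = ((c / m : ℕ) : ℂ)) :
    ∃ P : Fin (m + 1) → Matrix (Fin n) (Fin n) ℂ,
      (∀ i, (P i).IsHermitian ∧ P i * P i = P i ∧ (P i).trace = (c : ℂ)) ∧
      (∀ i j, P i * P j = P j * P i) ∧
      (m : ℂ) • Q = (∑ i, P i) - (m : ℂ) • P 0 := by
  obtain ⟨hH, hidem, htr⟩ := hQ
  set r := c / m with hr
  have hc : m * r = c := Nat.mul_div_cancel' hdvd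
  have hm0 : 0 < m := by omega
  have hrc : r ≤ c := Nat.div_le_self c m
  have hc0 : 0 < c := by nlinarith [hcm]
  set U : Matrix (Fin n) (Fin n) ℂ := (hH.eigenvectorUnitary : Matrix (Fin n) (Fin n) ℂ) with hU
  have hUU : star U * U = 1 := Unitary.coe_star_mul_self hH.eigenvectorUnitary
  have hUU' : U * star U = 1 := Unitary.coe_mul_star_self hH.eigenvectorUnitary
  set ev : Fin n → ℝ := hH.eigenvalues with hev_def
  set d : Fin n → ℂ := RCLike.ofReal ∘ ev with hd
  have hspec : Q = U * diagonal d * star U := hH.spectral_theorem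
  -- general facts about U * diagonal a * star U
  have key : ∀ a b : Fin n → ℂ,
      (U * diagonal a * star U) * (U * diagonal b * star U) = U * diagonal (a * b) * star U := by
    intro a b
    have h1 : (U * diagonal a * star U) * (U * diagonal b * star U)
        = U * (diagonal a * ((star U * U) * diagonal b)) * star U := by
      simp only [Matrix.mul_assoc]
    rw [h1, hUU, Matrix.one_mul, diagonal_mul_diagonal]
    rfl
  have keytr : ∀ a : Fin n → ℂ, (U * diagonal a * star U).trace = ∑ k, a k := by
    intro a
    rw [Matrix.trace_mul_comm, ← Matrix.mul_assoc, hUU, Matrix.one_mul, Matrix.trace_diagonal]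
  have keyherm : ∀ a : Fin n → ℂ, (∀ k, star (a k) = a k) →
      (U * diagonal a * star U).IsHermitian := by
    intro a ha
    have hsa : star a = a := funext fun k => ha k
    show ((U * diagonal a * star U)ᴴ = _)
    simp [conjTranspose_mul, diagonal_conjTranspose, hsa, Matrix.mul_assoc,
      Matrix.star_eq_conjTranspose]
  -- eigenvalues are 0 or 1
  have hdiagQ : star U * Q * U = diagonal d := by
    have h := hH.conjStarAlgAut_star_eigenvectorUnitary
    rw [Unitary.conjStarAlgAut_star_apply] at h
    exact h
  have hdd : diagonal d * diagonal d = diagonal d := by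
    have h1 : (star U * Q * U) * (star U * Q * U) = star U * (Q * Q) * U := by
      have : (star U * Q * U) * (star U * Q * U)
          = star U * (Q * ((U * star U) * (Q * U))) := by simp only [Matrix.mul_assoc]
      rw [this, hUU', Matrix.one_mul]
      simp only [Matrix.mul_assoc]
    rw [hdiagQ] at h1
    rw [h1, hidem, hdiagQ]
  have hev : ∀ k, ev k = 0 ∨ ev k = 1 := by
    intro k
    have h2 : d k * d k = d k := by
      rw [diagonal_mul_diagonal] at hdd
      have := congrArg (fun M => M k k) hdd
      simpa using this
    have h3 : ev k * ev k = ev k := by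
      have : ((ev k * ev k : ℝ) : ℂ) = ((ev k : ℝ) : ℂ) := by
        push_cast
        simpa [hd, Function.comp] using h2
      exact_mod_cast this
    have h4 : ev k * (ev k - 1) = 0 := by rw [mul_sub, mul_one, h3, sub_self]
    rcases mul_eq_zero.mp h4 with h | h
    · exact Or.inl h
    · exact Or.inr (by linarith)
  -- the eigenvalue-1 set has cardinality r
  set E : Finset (Fin n) := Finset.univ.filter (fun k => ev k = 1) with hE
  have hsum_d : ∑ k, d k = (r : ℂ) := by
    have : Q.trace = ∑ k, d k := by rw [hspec, keytr]
    rw [← this, htr]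
  have hEcard : E.card = r := by
    have h1 : ∑ k, d k = (E.card : ℂ) := by
      rw [← Finset.sum_subset (Finset.subset_univ E) (fun k _ hk => by
        simp only [hE, Finset.mem_filter, Finset.mem_univ, true_and] at hk
        rcases hev k with h | h
        · simp [hd, Function.comp, h]
        · exact absurd h hk)]
      rw [Finset.sum_congr rfl (fun k hk => by
        simp only [hE, Finset.mem_filter, Finset.mem_univ, true_and] at hk
        show d k = 1
        simp [hd, Function.comp, hk]), Finset.sum_const, nsmul_eq_mul, mul_one]
    have : (E.card : ℂ) = (r : ℂ) := by rw [← h1, hsum_d]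
    exact_mod_cast this
  -- choose the set T of size c in the kernel
  set Z : Finset (Fin n) := Finset.univ.filter (fun k => ¬ ev k = 1) with hZ
  have hZcard : E.card + Z.card = n := by
    rw [hE, hZ, Finset.card_filter_add_card_filter_not, Finset.card_univ,
      Fintype.card_fin]
  have hcZ : c ≤ Z.card := by omega
  obtain ⟨T, hTZ, hTcard⟩ := Finset.exists_subset_card_eq hcZ
  have hkT : ∀ k ∈ T, ev k = 0 := by
    intro k hk
    have := hTZ hk
    simp only [hZ, Finset.mem_filter, Finset.mem_univ, true_and] at this
    rcases hev k with h | h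
    · exact h
    · exact absurd h this
  set ψ : Fin c ↪o Fin n := T.orderEmbOfFin hTcard with hψ
  have hψinj : Function.Injective ψ := ψ.injective
  have hψT : ∀ t, ψ t ∈ T := fun t => Finset.orderEmbOfFin_mem T hTcard t
  have hTmap : T = Finset.univ.map ⟨⇑ψ, hψinj⟩ := by
    ext x
    simp only [Finset.mem_map, Finset.mem_univ, true_and, Function.Embedding.coeFn_mk]
    constructor
    · intro hx
      have : x ∈ Set.range ⇑ψ := by
        rw [Finset.range_orderEmbOfFin]
        exact hx
      exact this
    · rintro ⟨t, rfl⟩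
      exact hψT t
  have : Nonempty (Fin c) := ⟨⟨0, hc0⟩⟩
  set inv : Fin n → Fin c := Function.invFun ⇑ψ with hinvdef
  have hinv : ∀ t : Fin c, inv (ψ t) = t := fun t => Function.leftInverse_invFun hψinj t
  set lab : Fin n → ℕ := fun k => (inv k : ℕ) % m with hlab
  have hlabm : ∀ k, lab k < m := fun k => Nat.mod_lt _ hm0
  -- define the diagonal entries
  set g : Fin (m + 1) → Fin n → ℂ := fun i k =>
    if ev k = 1 then (if i = 0 then 0 else 1)
    else if k ∈ T then (if i = 0 then 1 else if (i : ℕ) = lab k + 1 then 0 else 1)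
    else 0 with hg
  have hg01 : ∀ i k, g i k = 0 ∨ g i k = 1 := by
    intro i k
    simp only [hg]
    split_ifs <;> simp
  set P : Fin (m + 1) → Matrix (Fin n) (Fin n) ℂ := fun i => U * diagonal (g i) * star U with hP
  refine ⟨P, ?_, ?_, ?_⟩
  · -- projections of trace c
    intro i
    refine ⟨keyherm _ (fun k => by rcases hg01 i k with h | h <;> simp [h]), ?_, ?_⟩
    · rw [hP, key]
      have hgg : g i * g i = g i := funext fun k => by
        rcases hg01 i k with h | h <;> simp [Pi.mul_apply, h]
      rw [hgg]
    · rw [hP, keytr]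
      -- split the sum over E, Z, T
      have hsplit : ∑ k, g i k = (∑ k ∈ E, g i k) + ∑ k ∈ Z, g i k := by
        rw [hE, hZ, Finset.sum_filter_add_sum_filter_not]
      have hZT : ∑ k ∈ Z, g i k = ∑ k ∈ T, g i k := by
        rw [Finset.sum_subset hTZ]
        intro k hk hkT'
        simp only [hZ, Finset.mem_filter, Finset.mem_univ, true_and] at hk
        simp [hg, hk, hkT']
      have hEterm : ∀ k ∈ E, g i k = if i = 0 then 0 else 1 := by
        intro k hk
        simp only [hE, Finset.mem_filter, Finset.mem_univ, true_and] at hk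
        simp [hg, hk]
      have hTterm : ∀ k ∈ T, g i k
          = (if i = 0 then 1 else if (i : ℕ) = lab k + 1 then 0 else 1) := by
        intro k hk
        have h0 : ev k = 0 := hkT k hk
        simp [hg, h0, hk]
      rcases eq_or_ne i 0 with hi | hi
      · -- i = 0 : trace is |T| = c
        rw [hsplit, hZT, Finset.sum_congr rfl hEterm, Finset.sum_congr rfl hTterm]
        simp [hi, hTcard]
      · -- i ≠ 0 : trace is |E| + (c - r) = c
        have hi0 : 0 < (i : ℕ) := Nat.pos_of_ne_zero (fun h => hi (Fin.ext h))
        have him : (i : ℕ) ≤ m := by omega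
        rw [hsplit, hZT, Finset.sum_congr rfl hEterm, Finset.sum_congr rfl hTterm]
        rw [Finset.sum_const, hEcard]
        simp only [hi, if_false, nsmul_eq_mul, mul_one]
        -- sum over T via ψ
        have hTsum : ∑ k ∈ T, (if (i : ℕ) = lab k + 1 then (0 : ℂ) else 1)
            = ∑ t : Fin c, (if t.val % m = (i : ℕ) - 1 then (0 : ℂ) else 1) := by
          rw [hTmap, Finset.sum_map]
          apply Finset.sum_congr rfl
          intro t _
          simp only [Function.Embedding.coeFn_mk, hlab, hinv t]
          congr 1
          simp only [eq_iff_iff]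
          omega
        rw [hTsum]
        have hcard : (Finset.univ.filter (fun t : Fin c => t.val % m = (i : ℕ) - 1)).card
            = r := filter_mod_card_fin c m r _ hm0 hc.symm (by omega)
        rw [Finset.sum_ite, Finset.sum_const, Finset.sum_const]
        rw [hcard]
        have hcard2 : (Finset.univ.filter (fun t : Fin c => ¬ t.val % m = (i : ℕ) - 1)).card
            = c - r := by
          have := Finset.card_filter_add_card_filter_not
            (s := (Finset.univ : Finset (Fin c)))
            (p := fun t : Fin c => t.val % m = (i : ℕ) - 1)
          rw [hcard, Finset.card_univ, Fintype.card_fin] at this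
          omega
        rw [hcard2]
        rw [nsmul_eq_mul, nsmul_eq_mul, mul_zero, zero_add, mul_one, ← Nat.cast_add]
        congr 1
        omega
  · -- commuting
    intro i j
    rw [hP, key, key, mul_comm]
  · -- the main identity
    have hsumP : ∑ i, P i = U * diagonal (fun k => ∑ i, g i k) * star U := by
      have h1 : ∑ i, P i = U * (∑ i, diagonal (g i)) * star U := by
        rw [Finset.mul_sum, Finset.sum_mul]
      have h2 : ∑ i, diagonal (g i) = diagonal (fun k => ∑ i, g i k) := by
        ext a b
        by_cases hab : a = b <;>
          simp [Matrix.sum_apply, Matrix.diagonal_apply, hab]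
      rw [h1, h2]
    have hsmul : ∀ x : Fin n → ℂ, (m : ℂ) • (U * diagonal x * star U)
        = U * diagonal (fun k => (m : ℂ) * x k) * star U := by
      intro x
      rw [← smul_mul_assoc, ← mul_smul_comm, ← diagonal_smul]
      rfl
    have hsmulP0 : (m : ℂ) • P 0 = U * diagonal (fun k => (m : ℂ) * g 0 k) * star U := by
      rw [hP]; exact hsmul (g 0)
    have hsmulQ : (m : ℂ) • Q = U * diagonal (fun k => (m : ℂ) * d k) * star U := by
      rw [hspec]; exact hsmul d
    rw [hsmulQ, hsumP, hsmulP0, ← sub_mul, ← mul_sub, diagonal_sub]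
    refine congrArg (fun v : Fin n → ℂ => U * diagonal v * star U) (funext fun k => ?_)
    show (m : ℂ) * d k = (∑ i, g i k) - (m : ℂ) * g 0 k
    -- pointwise identity
    rcases eq_or_ne (ev k) 1 with h1 | h1
    · -- eigenvalue 1
      have hgk : ∀ i : Fin (m + 1), g i k = if i = 0 then 0 else 1 := by
        intro i; simp [hg, h1]
      have hsum : ∑ i : Fin (m + 1), g i k = (m : ℂ) := by
        rw [Fin.sum_univ_succ]
        simp only [hgk]
        simp [Fin.succ_ne_zero]
      rw [hsum, hgk 0]
      simp [hd, Function.comp, h1]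
    · rcases eq_or_ne (ev k) 0 with h0 | h0
      · rcases Decidable.em (k ∈ T) with hkTmem | hkTmem
        · -- in T
          have hgk : ∀ i : Fin (m + 1),
              g i k = if i = 0 then 1 else if (i : ℕ) = lab k + 1 then 0 else 1 := by
            intro i; simp [hg, h1, hkTmem]
          have hsum : ∑ i : Fin (m + 1), g i k = (m : ℂ) := by
            rw [Fin.sum_univ_succ]
            simp only [hgk]
            rw [if_true]
            have hterm : ∀ i : Fin m,
                (if (i.succ : Fin (m + 1)) = 0 then (1 : ℂ)
                  else if ((i.succ : Fin (m + 1)) : ℕ) = lab k + 1 then 0 else 1)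
                = if i = (⟨lab k, hlabm k⟩ : Fin m) then 0 else 1 := by
              intro i
              rw [if_neg (Fin.succ_ne_zero i)]
              congr 1
              simp only [Fin.val_succ, eq_iff_iff, Fin.ext_iff]
              omega
            rw [Finset.sum_congr rfl (fun i _ => hterm i)]
            have : ∀ i : Fin m, (if i = (⟨lab k, hlabm k⟩ : Fin m) then (0 : ℂ) else 1)
                = 1 - (if i = (⟨lab k, hlabm k⟩ : Fin m) then 1 else 0) := by
              intro i; split_ifs <;> ring
            rw [Finset.sum_congr rfl (fun i _ => this i), Finset.sum_sub_distrib,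
              Finset.sum_const, Finset.sum_ite_eq' Finset.univ _ (fun _ => (1 : ℂ))]
            simp only [Finset.mem_univ, if_true, Finset.card_univ, Fintype.card_fin,
              nsmul_eq_mul, mul_one]
            ring
          rw [hsum, hgk 0, if_pos rfl]
          simp [hd, Function.comp, h0]
        · -- outside E and T : everything is zero
          have hgk : ∀ i : Fin (m + 1), g i k = 0 := by
            intro i; simp [hg, h1, hkTmem]
          simp [hgk, hd, Function.comp, h0, Finset.sum_const_zero]
      · exact absurd ((hev k).resolve_left h0) h1
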